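/- arXiv:2203.03187 — 2 statements merged into one kernel-verified Lean document; each statement's English description precedes it below -/
import Mathlib

section
/- (Theorem 2) Let D : ℝ^{n×d_model} × ℝ^{n_t×d_model} → ℝ^{n_t×d_model} be a transformer decoder layer D(M, T) = MLP(MHA(MHSA(T), M, M)), where MHSA(T) = MHA'(T, T, T) is multi-head self-attention on the target sequence, MHA(·, M, M) is multi-head cross-attention onto the memory sequence M, and MLP applies a fixed function f : ℝ^{d_model} → ℝ^{d_model} to each row independently. Then for any memory permutation matrix Φ ∈ 𝒫_n, D(ΦM, T) = D(M, T). -/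
open Matrix

/-- Row-wise softmax of a real matrix. -/
noncomputable def softmax {n m : ℕ} (M : Matrix (Fin n) (Fin m) ℝ) :
    Matrix (Fin n) (Fin m) ℝ :=
  Matrix.of fun i j => Real.exp (M i j) / ∑ k, Real.exp (M i k)

/-- The permutation matrix of a permutation `p`: `Φ i j = 1` if `p i = j`, else `0`. -/
def permMatrix {n : ℕ} (p : Equiv.Perm (Fin n)) : Matrix (Fin n) (Fin n) ℝ :=
  Matrix.of fun i j => if p i = j then 1 else 0

/-- Multi-head attention with `h` heads:
`MHA(Q,K,V) = ∑ i, σ(Q Wᵢ^Q (Wᵢ^K)ᵀ Kᵀ / √d_k) V Wᵢ^V Wᵢ^O`, with row-wise softmax `σ`. -/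
noncomputable def MHA {nq n dmodel dk dv h : ℕ}
    (WQ WK : Fin h → Matrix (Fin dmodel) (Fin dk) ℝ)
    (WV : Fin h → Matrix (Fin dmodel) (Fin dv) ℝ)
    (WO : Fin h → Matrix (Fin dv) (Fin dmodel) ℝ)
    (Q : Matrix (Fin nq) (Fin dmodel) ℝ)
    (K V : Matrix (Fin n) (Fin dmodel) ℝ) : Matrix (Fin nq) (Fin dmodel) ℝ :=
  ∑ i, softmax ((Real.sqrt dk)⁻¹ • (Q * WQ i * (WK i)ᵀ * Kᵀ)) * V * WV i * WO i

/-- `MLP` applies the function `f` to each row of its input independently. -/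
def rowMap {n d : ℕ} (f : (Fin d → ℝ) → (Fin d → ℝ)) (X : Matrix (Fin n) (Fin d) ℝ) :
    Matrix (Fin n) (Fin d) ℝ :=
  Matrix.of fun i => f (X i)

/-- Left multiplication by a permutation matrix permutes the rows. -/
lemma permMul {n m : ℕ} (p : Equiv.Perm (Fin n)) (M : Matrix (Fin n) (Fin m) ℝ) :
    permMatrix p * M = M.submatrix p id := by
  ext i j
  simp [Matrix.mul_apply, permMatrix, Matrix.submatrix_apply]

/-- Row-wise softmax commutes with column permutation. -/
lemma softmax_submatrix {n m : ℕ} (q : Equiv.Perm (Fin m)) (X : Matrix (Fin n) (Fin m) ℝ) :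
    softmax (X.submatrix id q) = (softmax X).submatrix id q := by
  ext i j
  simp only [softmax, Matrix.submatrix_apply, Matrix.of_apply, id]
  rw [Equiv.sum_comp q (fun k => Real.exp (X i k))]

/-- Multiplying a column-permuted matrix with a correspondingly row-permuted matrix. -/
lemma sub_mul_sub {a n m : ℕ} (p : Equiv.Perm (Fin n)) (Y : Matrix (Fin a) (Fin n) ℝ)
    (M : Matrix (Fin n) (Fin m) ℝ) :
    (Y.submatrix id p) * (M.submatrix p id) = Y * M := by
  ext i j
  simp only [Matrix.mul_apply, Matrix.submatrix_apply, id]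
  exact Equiv.sum_comp p (fun k => Y i k * M k j)

/-- Multiplication by a column-permuted matrix permutes the columns of the product. -/
lemma mulSubPerm {a k n : ℕ} (p : Equiv.Perm (Fin n)) (X : Matrix (Fin a) (Fin k) ℝ)
    (B : Matrix (Fin k) (Fin n) ℝ) :
    X * (B.submatrix id p) = (X * B).submatrix id p := by
  ext i j
  simp [Matrix.mul_apply]

/-- Cross-attention is invariant under permutation of the memory. -/
lemma MHA_perm {nq n dmodel dk dv h : ℕ}
    (WQ WK : Fin h → Matrix (Fin dmodel) (Fin dk) ℝ)
    (WV : Fin h → Matrix (Fin dmodel) (Fin dv) ℝ)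
    (WO : Fin h → Matrix (Fin dv) (Fin dmodel) ℝ)
    (Q : Matrix (Fin nq) (Fin dmodel) ℝ)
    (M : Matrix (Fin n) (Fin dmodel) ℝ) (p : Equiv.Perm (Fin n)) :
    MHA WQ WK WV WO Q (permMatrix p * M) (permMatrix p * M) = MHA WQ WK WV WO Q M M := by
  unfold MHA
  refine Finset.sum_congr rfl fun i _ => ?_
  rw [permMul]
  have h1 : (M.submatrix p id)ᵀ = Mᵀ.submatrix id p := by
    ext a b; simp
  rw [h1, mulSubPerm p (Q * WQ i * (WK i)ᵀ) Mᵀ]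
  have h2 : (Real.sqrt dk)⁻¹ • (Q * WQ i * (WK i)ᵀ * Mᵀ).submatrix id p
      = ((Real.sqrt dk)⁻¹ • (Q * WQ i * (WK i)ᵀ * Mᵀ)).submatrix id p := by
    ext a b; simp
  rw [h2, softmax_submatrix, sub_mul_sub]

/-- (Theorem 2) For a transformer decoder layer
`D(M, T) = MLP(MHA(MHSA(T), M, M))`, where `MHSA(T) = MHA'(T,T,T)` is self-attention on the
target sequence (with its own weights) and `MHA(·, M, M)` is cross-attention onto the memory,
permuting the memory does not change the output: `D(ΦM, T) = D(M, T)`. -/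
theorem decoder_layer_memory_perm_invariant {n nt dmodel : ℕ}
    {dk₁ dv₁ h₁ dk₂ dv₂ h₂ : ℕ}
    (WQ₁ WK₁ : Fin h₁ → Matrix (Fin dmodel) (Fin dk₁) ℝ)
    (WV₁ : Fin h₁ → Matrix (Fin dmodel) (Fin dv₁) ℝ)
    (WO₁ : Fin h₁ → Matrix (Fin dv₁) (Fin dmodel) ℝ)
    (WQ₂ WK₂ : Fin h₂ → Matrix (Fin dmodel) (Fin dk₂) ℝ)
    (WV₂ : Fin h₂ → Matrix (Fin dmodel) (Fin dv₂) ℝ)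
    (WO₂ : Fin h₂ → Matrix (Fin dv₂) (Fin dmodel) ℝ)
    (f : (Fin dmodel → ℝ) → (Fin dmodel → ℝ))
    (M : Matrix (Fin n) (Fin dmodel) ℝ) (T : Matrix (Fin nt) (Fin dmodel) ℝ)
    (p : Equiv.Perm (Fin n)) :
    rowMap f (MHA WQ₂ WK₂ WV₂ WO₂ (MHA WQ₁ WK₁ WV₁ WO₁ T T T)
        (permMatrix p * M) (permMatrix p * M)) =
      rowMap f (MHA WQ₂ WK₂ WV₂ WO₂ (MHA WQ₁ WK₁ WV₁ WO₁ T T T) M M) := by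
  rw [MHA_perm]
end

section
/- (Permutation invariance of the transformer) Let E : ℝ^{n×d_model} → ℝ^{n×d_model} be a composition of transformer encoder layers, each of the form X ↦ MLP(MHSA(X)) with MHSA(X) = MHA(X, X, X) and MLP applying a fixed row-wise function, and let D : ℝ^{n×d_model} × ℝ^{n_t×d_model} → ℝ^{n_t×d_model} be a composition (in the memory argument held fixed) of decoder layers of the form (M, T) ↦ MLP(MHA(MHSA(T), M, M)). Then for any input sequence X ∈ ℝ^{n×d_model}, any target sequence T ∈ ℝ^{n_t×d_model}, and any permutation matrix Φ ∈ 𝒫_n, the transformer output satisfies D(E(ΦX), T) = D(E(X), T); that is, permuting the input tokens does not change the final output. -/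
open Matrix

lemma permMatrix_mul {n m : ℕ} (p : Equiv.Perm (Fin n)) (M : Matrix (Fin n) (Fin m) ℝ) :
    permMatrix p * M = Matrix.of fun i j => M (p i) j := by
  ext i j
  simp [permMatrix, Matrix.mul_apply]

lemma mul_permMatrixT {n m : ℕ} (p : Equiv.Perm (Fin n)) (M : Matrix (Fin m) (Fin n) ℝ) :
    M * (permMatrix p)ᵀ = Matrix.of fun i j => M i (p j) := by
  ext i j
  simp [permMatrix, Matrix.mul_apply, Matrix.transpose_apply]

lemma mul_permMatrix {n m : ℕ} (p : Equiv.Perm (Fin n)) (M : Matrix (Fin m) (Fin n) ℝ) :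
    M * permMatrix p = Matrix.of fun i j => M i (p⁻¹ j) := by
  ext i j
  simp only [permMatrix, Matrix.mul_apply, Matrix.of_apply]
  have : ∀ k, (p k = j) = (k = p⁻¹ j) := by
    intro k; simp [Equiv.eq_symm_apply, eq_comm, Equiv.Perm.inv_def]
  simp [this]

lemma mulPermT_mulPerm {n m : ℕ} (p : Equiv.Perm (Fin n)) (M : Matrix (Fin m) (Fin n) ℝ) :
    M * (permMatrix p)ᵀ * permMatrix p = M := by
  rw [mul_permMatrixT, mul_permMatrix]
  ext i j
  simp

lemma permT_mul {n m : ℕ} (p : Equiv.Perm (Fin n)) (M : Matrix (Fin n) (Fin m) ℝ) :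
    (permMatrix p)ᵀ * M = Matrix.of fun i j => M (p⁻¹ i) j := by
  ext i j
  simp only [permMatrix, Matrix.mul_apply, Matrix.transpose_apply, Matrix.of_apply]
  have : ∀ k, (p k = i) = (k = p⁻¹ i) := by
    intro k; simp [Equiv.eq_symm_apply, eq_comm, Equiv.Perm.inv_def]
  simp [this]

lemma permT_perm_mul {n m : ℕ} (p : Equiv.Perm (Fin n)) (M : Matrix (Fin n) (Fin m) ℝ) :
    (permMatrix p)ᵀ * (permMatrix p * M) = M := by
  rw [permMatrix_mul, permT_mul]
  ext i j
  simp

lemma softmax_permMul {n m : ℕ} (p : Equiv.Perm (Fin n)) (M : Matrix (Fin n) (Fin m) ℝ) :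
    softmax (permMatrix p * M) = permMatrix p * softmax M := by
  rw [permMatrix_mul, permMatrix_mul]
  ext i j
  simp [softmax]

lemma softmax_mulPermT {n m : ℕ} (p : Equiv.Perm (Fin n)) (M : Matrix (Fin m) (Fin n) ℝ) :
    softmax (M * (permMatrix p)ᵀ) = softmax M * (permMatrix p)ᵀ := by
  rw [mul_permMatrixT, mul_permMatrixT]
  ext i j
  simp only [softmax, Matrix.of_apply]
  congr 1
  exact Equiv.sum_comp p (fun k => Real.exp (M i k))

lemma rowMap_perm {n d : ℕ} (f : (Fin d → ℝ) → (Fin d → ℝ)) (p : Equiv.Perm (Fin n))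
    (X : Matrix (Fin n) (Fin d) ℝ) :
    rowMap f (permMatrix p * X) = permMatrix p * rowMap f X := by
  rw [permMatrix_mul, permMatrix_mul]
  rfl

lemma MHA_mem_perm {nq n dmodel dk dv h : ℕ}
    (WQ WK : Fin h → Matrix (Fin dmodel) (Fin dk) ℝ)
    (WV : Fin h → Matrix (Fin dmodel) (Fin dv) ℝ)
    (WO : Fin h → Matrix (Fin dv) (Fin dmodel) ℝ)
    (p : Equiv.Perm (Fin n))
    (Q : Matrix (Fin nq) (Fin dmodel) ℝ) (M : Matrix (Fin n) (Fin dmodel) ℝ) :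
    MHA WQ WK WV WO Q (permMatrix p * M) (permMatrix p * M) = MHA WQ WK WV WO Q M M := by
  unfold MHA
  refine Finset.sum_congr rfl fun i _ => ?_
  have h1 : (Real.sqrt dk)⁻¹ • (Q * WQ i * (WK i)ᵀ * (permMatrix p * M)ᵀ)
      = ((Real.sqrt dk)⁻¹ • (Q * WQ i * (WK i)ᵀ * Mᵀ)) * (permMatrix p)ᵀ := by
    rw [Matrix.transpose_mul, Matrix.smul_mul]
    simp only [Matrix.mul_assoc]
  rw [h1, softmax_mulPermT]
  simp only [Matrix.mul_assoc]
  rw [permT_perm_mul]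

lemma MHA_self_perm {n dmodel dk dv h : ℕ}
    (WQ WK : Fin h → Matrix (Fin dmodel) (Fin dk) ℝ)
    (WV : Fin h → Matrix (Fin dmodel) (Fin dv) ℝ)
    (WO : Fin h → Matrix (Fin dv) (Fin dmodel) ℝ)
    (p : Equiv.Perm (Fin n)) (Y : Matrix (Fin n) (Fin dmodel) ℝ) :
    MHA WQ WK WV WO (permMatrix p * Y) (permMatrix p * Y) (permMatrix p * Y)
      = permMatrix p * MHA WQ WK WV WO Y Y Y := by
  unfold MHA
  rw [Matrix.mul_sum]
  refine Finset.sum_congr rfl fun i _ => ?_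
  have h1 : (Real.sqrt dk)⁻¹ • (permMatrix p * Y * WQ i * (WK i)ᵀ * (permMatrix p * Y)ᵀ)
      = permMatrix p * ((Real.sqrt dk)⁻¹ • (Y * WQ i * (WK i)ᵀ * Yᵀ)) * (permMatrix p)ᵀ := by
    rw [Matrix.transpose_mul, Matrix.mul_smul, Matrix.smul_mul]
    congr 1
    simp only [Matrix.mul_assoc]
  rw [h1, softmax_mulPermT, softmax_permMul]
  simp only [Matrix.mul_assoc]
  rw [permT_perm_mul]

lemma foldl_comm {α β : Type*} : ∀ (n : ℕ) (f : α → Fin n → α) (g : β → Fin n → β)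
    (h : α → β), (∀ a l, h (f a l) = g (h a) l) → ∀ a : α,
    h (Fin.foldl n f a) = Fin.foldl n g (h a)
  | 0, f, g, h, hc, a => by simp [Fin.foldl_zero]
  | (n+1), f, g, h, hc, a => by
    rw [Fin.foldl_succ, Fin.foldl_succ, ← hc]
    exact foldl_comm n _ _ h (fun a l => hc a l.succ) (f a 0)

lemma encoder_perm {n dmodel : ℕ} (Le : ℕ) (he dke dve : Fin Le → ℕ)
    (EWQ EWK : (l : Fin Le) → Fin (he l) → Matrix (Fin dmodel) (Fin (dke l)) ℝ)
    (EWV : (l : Fin Le) → Fin (he l) → Matrix (Fin dmodel) (Fin (dve l)) ℝ)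
    (EWO : (l : Fin Le) → Fin (he l) → Matrix (Fin (dve l)) (Fin dmodel) ℝ)
    (fe : Fin Le → (Fin dmodel → ℝ) → (Fin dmodel → ℝ))
    (p : Equiv.Perm (Fin n)) (X : Matrix (Fin n) (Fin dmodel) ℝ) :
    Fin.foldl Le
        (fun Y l => rowMap (fe l) (MHA (EWQ l) (EWK l) (EWV l) (EWO l) Y Y Y))
        (permMatrix p * X)
      = permMatrix p * Fin.foldl Le
        (fun Y l => rowMap (fe l) (MHA (EWQ l) (EWK l) (EWV l) (EWO l) Y Y Y)) X := by
  refine (foldl_comm Le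
    (fun Y l => rowMap (fe l) (MHA (EWQ l) (EWK l) (EWV l) (EWO l) Y Y Y))
    (fun Y l => rowMap (fe l) (MHA (EWQ l) (EWK l) (EWV l) (EWO l) Y Y Y))
    (fun M => permMatrix p * M) ?_ X).symm
  intro Y l
  rw [MHA_self_perm, rowMap_perm]

lemma decoder_perm {n nt dmodel : ℕ} (Ld : ℕ)
    (h₁ dk₁ dv₁ h₂ dk₂ dv₂ : Fin Ld → ℕ)
    (DWQ₁ DWK₁ : (l : Fin Ld) → Fin (h₁ l) → Matrix (Fin dmodel) (Fin (dk₁ l)) ℝ)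
    (DWV₁ : (l : Fin Ld) → Fin (h₁ l) → Matrix (Fin dmodel) (Fin (dv₁ l)) ℝ)
    (DWO₁ : (l : Fin Ld) → Fin (h₁ l) → Matrix (Fin (dv₁ l)) (Fin dmodel) ℝ)
    (DWQ₂ DWK₂ : (l : Fin Ld) → Fin (h₂ l) → Matrix (Fin dmodel) (Fin (dk₂ l)) ℝ)
    (DWV₂ : (l : Fin Ld) → Fin (h₂ l) → Matrix (Fin dmodel) (Fin (dv₂ l)) ℝ)
    (DWO₂ : (l : Fin Ld) → Fin (h₂ l) → Matrix (Fin (dv₂ l)) (Fin dmodel) ℝ)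
    (fd : Fin Ld → (Fin dmodel → ℝ) → (Fin dmodel → ℝ))
    (p : Equiv.Perm (Fin n)) (M : Matrix (Fin n) (Fin dmodel) ℝ)
    (T : Matrix (Fin nt) (Fin dmodel) ℝ) :
    Fin.foldl Ld
        (fun Tc l => rowMap (fd l) (MHA (DWQ₂ l) (DWK₂ l) (DWV₂ l) (DWO₂ l)
          (MHA (DWQ₁ l) (DWK₁ l) (DWV₁ l) (DWO₁ l) Tc Tc Tc)
          (permMatrix p * M) (permMatrix p * M))) T
      = Fin.foldl Ld
        (fun Tc l => rowMap (fd l) (MHA (DWQ₂ l) (DWK₂ l) (DWV₂ l) (DWO₂ l)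
          (MHA (DWQ₁ l) (DWK₁ l) (DWV₁ l) (DWO₁ l) Tc Tc Tc) M M)) T := by
  have hf : (fun (Tc : Matrix (Fin nt) (Fin dmodel) ℝ) (l : Fin Ld) =>
        rowMap (fd l) (MHA (DWQ₂ l) (DWK₂ l) (DWV₂ l) (DWO₂ l)
          (MHA (DWQ₁ l) (DWK₁ l) (DWV₁ l) (DWO₁ l) Tc Tc Tc)
          (permMatrix p * M) (permMatrix p * M)))
      = (fun (Tc : Matrix (Fin nt) (Fin dmodel) ℝ) (l : Fin Ld) =>
        rowMap (fd l) (MHA (DWQ₂ l) (DWK₂ l) (DWV₂ l) (DWO₂ l)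
          (MHA (DWQ₁ l) (DWK₁ l) (DWV₁ l) (DWO₁ l) Tc Tc Tc) M M)) := by
    funext Tc l
    rw [MHA_mem_perm]
  rw [hf]

set_option maxHeartbeats 2000000 in
/-- (Permutation invariance of the transformer) Let `E` be a composition of encoder layers
`X ↦ MLP(MHSA(X))` and `D` a composition (with the memory argument held fixed) of decoder
layers `(M, T) ↦ MLP(MHA(MHSA(T), M, M))`, each layer having its own weight matrices and
row-wise function. Then `D(E(ΦX), T) = D(E(X), T)`: permuting the input tokens does not
change the final output. -/
theorem transformer_perm_invariant {n nt dmodel : ℕ} (Le Ld : ℕ)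
    (he dke dve : Fin Le → ℕ)
    (EWQ EWK : (l : Fin Le) → Fin (he l) → Matrix (Fin dmodel) (Fin (dke l)) ℝ)
    (EWV : (l : Fin Le) → Fin (he l) → Matrix (Fin dmodel) (Fin (dve l)) ℝ)
    (EWO : (l : Fin Le) → Fin (he l) → Matrix (Fin (dve l)) (Fin dmodel) ℝ)
    (fe : Fin Le → (Fin dmodel → ℝ) → (Fin dmodel → ℝ))
    (h₁ dk₁ dv₁ h₂ dk₂ dv₂ : Fin Ld → ℕ)
    (DWQ₁ DWK₁ : (l : Fin Ld) → Fin (h₁ l) → Matrix (Fin dmodel) (Fin (dk₁ l)) ℝ)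
    (DWV₁ : (l : Fin Ld) → Fin (h₁ l) → Matrix (Fin dmodel) (Fin (dv₁ l)) ℝ)
    (DWO₁ : (l : Fin Ld) → Fin (h₁ l) → Matrix (Fin (dv₁ l)) (Fin dmodel) ℝ)
    (DWQ₂ DWK₂ : (l : Fin Ld) → Fin (h₂ l) → Matrix (Fin dmodel) (Fin (dk₂ l)) ℝ)
    (DWV₂ : (l : Fin Ld) → Fin (h₂ l) → Matrix (Fin dmodel) (Fin (dv₂ l)) ℝ)
    (DWO₂ : (l : Fin Ld) → Fin (h₂ l) → Matrix (Fin (dv₂ l)) (Fin dmodel) ℝ)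
    (fd : Fin Ld → (Fin dmodel → ℝ) → (Fin dmodel → ℝ))
    (X : Matrix (Fin n) (Fin dmodel) ℝ) (T : Matrix (Fin nt) (Fin dmodel) ℝ)
    (p : Equiv.Perm (Fin n)) :
    (let E : Matrix (Fin n) (Fin dmodel) ℝ → Matrix (Fin n) (Fin dmodel) ℝ := fun X₀ =>
      Fin.foldl Le
        (fun Y l => rowMap (fe l) (MHA (EWQ l) (EWK l) (EWV l) (EWO l) Y Y Y)) X₀
     let D : Matrix (Fin n) (Fin dmodel) ℝ → Matrix (Fin nt) (Fin dmodel) ℝ →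
        Matrix (Fin nt) (Fin dmodel) ℝ := fun M T₀ =>
      Fin.foldl Ld
        (fun Tc l => rowMap (fd l) (MHA (DWQ₂ l) (DWK₂ l) (DWV₂ l) (DWO₂ l)
          (MHA (DWQ₁ l) (DWK₁ l) (DWV₁ l) (DWO₁ l) Tc Tc Tc) M M)) T₀
     D (E (permMatrix p * X)) T = D (E X) T) := by
  dsimp only
  rw [encoder_perm Le he dke dve EWQ EWK EWV EWO fe p X]
  exact decoder_perm Ld h₁ dk₁ dv₁ h₂ dk₂ dv₂ DWQ₁ DWK₁ DWV₁ DWO₁ DWQ₂ DWK₂ DWV₂ DWO₂ fd p _ T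
end
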